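/- Let m ≥ 2. The set of numerical semigroups with concentration 2 and multiplicity m is finite if and only if m is odd. -/
import Mathlib


open Set

/-- A numerical semigroup: contains 0, closed under addition, finite complement. -/
def IsNumSgp (S : Set ℕ) : Prop :=
  0 ∈ S ∧ (∀ a ∈ S, ∀ b ∈ S, a + b ∈ S) ∧ (Sᶜ : Set ℕ).Finite

/-- The multiplicity: least positive element. -/
noncomputable def mult (S : Set ℕ) : ℕ := sInf {n | n ∈ S ∧ n ≠ 0}

/-- next_S(s) = min { x ∈ S | s < x }. -/
noncomputable def nextS (S : Set ℕ) (s : ℕ) : ℕ := sInf {x | x ∈ S ∧ s < x}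

/-- The concentration C(S) = max { next_S(s) - s | s ∈ S \ {0} }. -/
noncomputable def conc (S : Set ℕ) : ℕ :=
  sSup {d | ∃ s ∈ S, s ≠ 0 ∧ d = nextS S s - s}

/-- The Frobenius number: largest gap. -/
noncomputable def frob (S : Set ℕ) : ℕ := sSup (Sᶜ : Set ℕ)

/-- The genus: number of gaps. -/
noncomputable def genus (S : Set ℕ) : ℕ := (Sᶜ : Set ℕ).ncard

/-- x is a minimal generator of S. -/
def IsMinGen (S : Set ℕ) (x : ℕ) : Prop :=
  x ∈ S ∧ x ≠ 0 ∧ ¬∃ a ∈ S, ∃ b ∈ S, a ≠ 0 ∧ b ≠ 0 ∧ a + b = x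

/-- The embedding dimension: number of minimal generators. -/
noncomputable def edim (S : Set ℕ) : ℕ := {x | IsMinGen S x}.ncard

/-- n(S): the number of elements of S smaller than the Frobenius number. -/
noncomputable def nS (S : Set ℕ) : ℕ := {s | s ∈ S ∧ s < frob S}.ncard

/-- The half-line Δ(m) = {0} ∪ {m, m+1, ...}. -/
def Delta (m : ℕ) : Set ℕ := {0} ∪ {n | m ≤ n}

def IsHalfLine (S : Set ℕ) : Prop := ∃ m, S = Delta m

/-- An irreducible numerical semigroup. -/
def Irred (S : Set ℕ) : Prop :=
  ¬∃ T₁ T₂ : Set ℕ, IsNumSgp T₁ ∧ IsNumSgp T₂ ∧ S ⊂ T₁ ∧ S ⊂ T₂ ∧ S = T₁ ∩ T₂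

section Aux

lemma numsgp_nsmul_mem {S : Set ℕ} (hS : IsNumSgp S) {x : ℕ} (hx : x ∈ S) :
    ∀ a : ℕ, a * x ∈ S := by
  intro a
  induction a with
  | zero => simpa using hS.1
  | succ n ih => have := hS.2.1 _ ih _ hx; simpa [Nat.succ_mul] using this

lemma numsgp_mem_of_frob_lt {S : Set ℕ} (hS : IsNumSgp S) {n : ℕ} (h : frob S < n) : n ∈ S := by
  by_contra hn
  exact absurd (le_csSup hS.2.2.bddAbove (by exact hn : n ∈ (Sᶜ : Set ℕ))) (not_le.mpr h)

lemma numsgp_mult_mem {S : Set ℕ} (hS : IsNumSgp S) {m : ℕ} (hm : mult S = m) (h2 : 2 ≤ m) :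
    m ∈ S ∧ ∀ n ∈ S, n ≠ 0 → m ≤ n := by
  have hinf : S.Infinite := by
    have := hS.2.2.infinite_compl
    rwa [compl_compl] at this
  have hne : {n | n ∈ S ∧ n ≠ 0}.Nonempty := by
    obtain ⟨n, hn⟩ := (hinf.diff (Set.finite_singleton 0)).nonempty
    exact ⟨n, hn.1, by simpa using hn.2⟩
  have hmem := Nat.sInf_mem hne
  rw [show sInf {n | n ∈ S ∧ n ≠ 0} = mult S from rfl, hm] at hmem
  refine ⟨hmem.1, fun n hn hn0 => ?_⟩
  have := Nat.sInf_le (s := {n | n ∈ S ∧ n ≠ 0}) ⟨hn, hn0⟩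
  rwa [show sInf {n | n ∈ S ∧ n ≠ 0} = mult S from rfl, hm] at this

lemma numsgp_nextS_mem {S : Set ℕ} (hS : IsNumSgp S) (s : ℕ) :
    nextS S s ∈ S ∧ s < nextS S s := by
  have hne : {x | x ∈ S ∧ s < x}.Nonempty :=
    ⟨max s (frob S) + 1, numsgp_mem_of_frob_lt hS (by omega), by omega⟩
  exact Nat.sInf_mem hne

lemma numsgp_nextS_le {S : Set ℕ} (hS : IsNumSgp S) (hc : conc S = 2) {s : ℕ}
    (hs : s ∈ S) (h0 : s ≠ 0) : nextS S s ≤ s + 2 := by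
  have hbdd : BddAbove {d | ∃ s ∈ S, s ≠ 0 ∧ d = nextS S s - s} := by
    refine ⟨frob S + 1, fun d hd => ?_⟩
    obtain ⟨t, ht, ht0, rfl⟩ := hd
    have h1 : nextS S t ≤ max t (frob S) + 1 :=
      Nat.sInf_le ⟨numsgp_mem_of_frob_lt hS (by omega), by omega⟩
    omega
  have hmem : nextS S s - s ∈ {d | ∃ s ∈ S, s ≠ 0 ∧ d = nextS S s - s} := ⟨s, hs, h0, rfl⟩
  have := le_csSup hbdd hmem
  rw [show sSup {d | ∃ s ∈ S, s ≠ 0 ∧ d = nextS S s - s} = conc S from rfl, hc] at this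
  have := (numsgp_nextS_mem hS s).2
  omega

lemma rep_lemma (m c n : ℕ) (hm : 2 ≤ m) (hco : Nat.Coprime c m) (hn : m * c ≤ n) :
    ∃ a b, n = a * m + b * c := by
  haveI : NeZero m := ⟨by omega⟩
  have hcu : IsUnit (c : ZMod m) := (ZMod.isUnit_iff_coprime c m).mpr hco
  set k := ((n : ZMod m) * (c : ZMod m)⁻¹).val with hk
  have hklt : k < m := ZMod.val_lt _
  have hmod : ((k * c : ℕ) : ZMod m) = (n : ZMod m) := by
    push_cast
    rw [hk, ZMod.natCast_val, ZMod.cast_id, mul_assoc, ZMod.inv_mul_of_unit _ hcu, mul_one]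
  have hle : k * c ≤ n := le_trans (Nat.mul_le_mul_right c (le_of_lt hklt)) hn
  have hdvd : m ∣ n - k * c := (Nat.modEq_iff_dvd' hle).mp ((ZMod.natCast_eq_natCast_iff _ _ _).mp hmod)
  obtain ⟨a, ha⟩ := hdvd
  exact ⟨a, k, by rw [Nat.mul_comm a m]; omega⟩

lemma eventually_mem {S : Set ℕ} {m : ℕ} (hS : IsNumSgp S) (hc : conc S = 2)
    (hmu : mult S = m) (h2 : 2 ≤ m) (hodd : Odd m) :
    ∀ n, m * (m + 2) ≤ n → n ∈ S := by
  obtain ⟨hmS, hmin⟩ := numsgp_mult_mem hS hmu h2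
  set c := nextS S m with hcdef
  obtain ⟨hcS, hmc⟩ := numsgp_nextS_mem hS m
  have hcle : c ≤ m + 2 := numsgp_nextS_le hS hc hmS (by omega)
  have hco : Nat.Coprime c m := by
    have hc2 : c = m + 1 ∨ c = m + 2 := by omega
    have hm2 : Nat.Coprime m 2 :=
      Nat.coprime_comm.mpr (Nat.prime_two.coprime_iff_not_dvd.mpr (by
        rcases hodd with ⟨t, rfl⟩; omega))
    rcases hc2 with h | h
    · rw [h, Nat.coprime_comm, show m + 1 = 1 + m by ring, Nat.coprime_add_self_right]
      exact Nat.coprime_one_right m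
    · rw [h, Nat.coprime_comm, show m + 2 = 2 + m by ring, Nat.coprime_add_self_right]
      exact hm2
  intro n hn
  obtain ⟨a, b, rfl⟩ := rep_lemma m c n h2 hco
    (le_trans (Nat.mul_le_mul_left m hcle) hn)
  exact hS.2.1 _ (numsgp_nsmul_mem hS hmS a) _ (numsgp_nsmul_mem hS hcS b)

/-- The family witnessing infiniteness for even m. -/
def Tfam (m k : ℕ) : Set ℕ := {0} ∪ {n | m ≤ n ∧ (2 ∣ n ∨ m + 2 * k + 2 ≤ n)}

lemma Tfam_mem_iff (m k n : ℕ) :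
    n ∈ Tfam m k ↔ n = 0 ∨ (m ≤ n ∧ (2 ∣ n ∨ m + 2 * k + 2 ≤ n)) := by
  simp [Tfam]

lemma Tfam_props (m k : ℕ) (hm : 2 ≤ m) (heven : 2 ∣ m) :
    IsNumSgp (Tfam m k) ∧ conc (Tfam m k) = 2 ∧ mult (Tfam m k) = m := by
  have hsgp : IsNumSgp (Tfam m k) := by
    refine ⟨by simp [Tfam], ?_, ?_⟩
    · intro a ha b hb
      rw [Tfam_mem_iff] at ha hb ⊢
      omega
    · refine Set.Finite.subset (Set.finite_Iio (m + 2 * k + 2)) ?_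
      intro n hn
      simp only [Set.mem_compl_iff, Tfam_mem_iff] at hn
      simp only [Set.mem_Iio]
      omega
  have hstep : ∀ s ∈ Tfam m k, s ≠ 0 → s + 2 ∈ Tfam m k := by
    intro s hs h0
    rw [Tfam_mem_iff] at hs ⊢
    omega
  have hnext : ∀ s ∈ Tfam m k, s ≠ 0 → nextS (Tfam m k) s ≤ s + 2 := by
    intro s hs h0
    exact Nat.sInf_le ⟨hstep s hs h0, by omega⟩
  have hnextm : nextS (Tfam m k) m = m + 2 := by
    refine le_antisymm (hnext m (by rw [Tfam_mem_iff]; omega) (by omega)) ?_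
    refine le_csInf ⟨m + 2, hstep m (by rw [Tfam_mem_iff]; omega) (by omega), by omega⟩ ?_
    intro x hx
    obtain ⟨hx1, hx2⟩ := hx
    rw [Tfam_mem_iff] at hx1
    omega
  refine ⟨hsgp, ?_, ?_⟩
  · -- conc = 2
    have hub : ∀ d ∈ {d | ∃ s ∈ Tfam m k, s ≠ 0 ∧ d = nextS (Tfam m k) s - s}, d ≤ 2 := by
      rintro d ⟨s, hs, h0, rfl⟩
      have := hnext s hs h0
      omega
    have hmem : (2 : ℕ) ∈ {d | ∃ s ∈ Tfam m k, s ≠ 0 ∧ d = nextS (Tfam m k) s - s} :=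
      ⟨m, by rw [Tfam_mem_iff]; omega, by omega, by rw [hnextm]; omega⟩
    exact le_antisymm (csSup_le ⟨2, hmem⟩ hub) (le_csSup ⟨2, hub⟩ hmem)
  · -- mult = m
    refine le_antisymm (Nat.sInf_le ⟨by rw [Tfam_mem_iff]; omega, by omega⟩) ?_
    refine le_csInf ⟨m, by rw [Tfam_mem_iff]; omega, by omega⟩ ?_
    rintro n ⟨hn, h0⟩
    rw [Tfam_mem_iff] at hn
    omega

lemma Tfam_inj (m : ℕ) (hm : 2 ≤ m) (heven : 2 ∣ m) : Function.Injective (Tfam m) := by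
  have key : ∀ k j : ℕ, Tfam m k = Tfam m j → j ≤ k := by
    intro k j h
    have hx : m + 2 * k + 3 ∈ Tfam m k := by rw [Tfam_mem_iff]; omega
    rw [h, Tfam_mem_iff] at hx
    omega
  intro k j h
  exact le_antisymm (key j k h.symm) (key k j h)

end Aux


theorem stmt11 (m : ℕ) (hm : 2 ≤ m) :
    {S : Set ℕ | IsNumSgp S ∧ conc S = 2 ∧ mult S = m}.Finite ↔ Odd m := by
  constructor
  · intro hfin
    by_contra hodd
    have heven : 2 ∣ m := by
      rcases Nat.even_or_odd m with h | h
      · exact h.two_dvd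
      · exact absurd h hodd
    have hinf : {S : Set ℕ | IsNumSgp S ∧ conc S = 2 ∧ mult S = m}.Infinite :=
      Set.infinite_of_injective_forall_mem (Tfam_inj m hm heven)
        (fun k => Tfam_props m k hm heven)
    exact hinf hfin
  · intro hodd
    set B := m * (m + 2) with hB
    apply Set.Finite.of_finite_image (f := fun S => S ∩ Set.Iic B)
    · refine Set.Finite.subset ((Set.finite_Iic B).finite_subsets) ?_
      rintro t ⟨S, _, rfl⟩
      exact Set.inter_subset_right
    · rintro S ⟨hS, hcS, hmS⟩ T ⟨hT, hcT, hmT⟩ heq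
      have hSk := eventually_mem hS hcS hmS hm hodd
      have hTk := eventually_mem hT hcT hmT hm hodd
      simp only at heq
      ext n
      rcases le_or_gt n B with h | h
      · constructor
        · intro hn
          have : n ∈ T ∩ Set.Iic B := heq ▸ (⟨hn, h⟩ : n ∈ S ∩ Set.Iic B)
          exact this.1
        · intro hn
          have : n ∈ S ∩ Set.Iic B := heq.symm ▸ (⟨hn, h⟩ : n ∈ T ∩ Set.Iic B)
          exact this.1
      · exact ⟨fun _ => hTk n (by omega), fun _ => hSk n (by omega)⟩
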